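/- For j ≥ 6 let ρ_j be the unique real solution in (0,1) of σ_j(z) = 1, where σ_j(z) = σ(z) - z^j/(1-z^j) and σ(z) = ∑_{ℓ≥1} (-1)^{ℓ-1} z^ℓ/(1-z^ℓ), and let ρ be the unique real solution of σ(z) = 1 in (0,1). Then the sequence (ρ_j)_{j≥6} is strictly decreasing and converges to ρ as j → ∞. -/

import Mathlib

open Filter

/-- `σ(z) = ∑_{ℓ≥1} (-1)^{ℓ-1} z^ℓ/(1-z^ℓ)` for real `z`. -/
noncomputable def sigmaFn (z : ℝ) : ℝ :=
  ∑' ℓ : ℕ, (-1 : ℝ) ^ ℓ * z ^ (ℓ + 1) / (1 - z ^ (ℓ + 1))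

/-- `σ_j(z) = σ(z) - z^j/(1-z^j)`. -/
noncomputable def sigmaJFn (j : ℕ) (z : ℝ) : ℝ :=
  sigmaFn z - z ^ j / (1 - z ^ j)

open Set in
/-- Norm bound on the terms of the series. -/
lemma sigma_term_norm_le {z b : ℝ} (h0 : 0 ≤ z) (hzb : z ≤ b) (hb : b < 1) (ℓ : ℕ) :
    ‖(-1 : ℝ) ^ ℓ * z ^ (ℓ + 1) / (1 - z ^ (ℓ + 1))‖ ≤ b ^ ℓ * (b / (1 - b)) := by
  have hz1 : z < 1 := lt_of_le_of_lt hzb hb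
  have hpow_le_z : z ^ (ℓ + 1) ≤ z := by
    simpa using pow_le_pow_of_le_one h0 hz1.le (Nat.one_le_iff_ne_zero.mpr (Nat.succ_ne_zero ℓ))
  have hpow_lt1 : z ^ (ℓ + 1) < 1 := lt_of_le_of_lt (hpow_le_z.trans hzb) hb
  have hden_pos : 0 < 1 - z ^ (ℓ + 1) := by linarith
  have hnum_nonneg : 0 ≤ z ^ (ℓ + 1) := pow_nonneg h0 _
  have habs : ‖(-1 : ℝ) ^ ℓ * z ^ (ℓ + 1) / (1 - z ^ (ℓ + 1))‖
      = z ^ (ℓ + 1) / (1 - z ^ (ℓ + 1)) := by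
    rw [Real.norm_eq_abs, abs_div, abs_mul, abs_pow, abs_neg, abs_one, one_pow, one_mul,
      abs_of_nonneg hnum_nonneg, abs_of_pos hden_pos]
  rw [habs]
  have h1 : z ^ (ℓ + 1) / (1 - z ^ (ℓ + 1)) ≤ b ^ (ℓ + 1) / (1 - b) := by
    apply div_le_div₀ (pow_nonneg (h0.trans hzb) _) (pow_le_pow_left₀ h0 hzb _)
      (by linarith)
    have : z ^ (ℓ + 1) ≤ b := hpow_le_z.trans hzb
    linarith
  calc z ^ (ℓ + 1) / (1 - z ^ (ℓ + 1)) ≤ b ^ (ℓ + 1) / (1 - b) := h1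
    _ = b ^ ℓ * (b / (1 - b)) := by rw [pow_succ]; ring

open Set in
lemma sigmaFn_continuousAt {x : ℝ} (hx : x ∈ Ioo (0 : ℝ) 1) : ContinuousAt sigmaFn x := by
  obtain ⟨hx0, hx1⟩ := hx
  set b : ℝ := (x + 1) / 2 with hbdef
  have hxb : x < b := by rw [hbdef]; linarith
  have hb1 : b < 1 := by rw [hbdef]; linarith
  have hb0 : 0 ≤ b := by rw [hbdef]; linarith
  have hcont : ContinuousOn sigmaFn (Icc 0 b) := by
    apply continuousOn_tsum (u := fun ℓ => b ^ ℓ * (b / (1 - b)))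
    · intro ℓ
      apply ContinuousOn.div
      · exact (continuous_const.mul (continuous_pow _)).continuousOn
      · exact (continuous_const.sub (continuous_pow _)).continuousOn
      · intro z hz
        have hz1 : z ^ (ℓ + 1) < 1 :=
          lt_of_le_of_lt (by
            calc z ^ (ℓ + 1) ≤ b ^ (ℓ + 1) := pow_le_pow_left₀ hz.1 hz.2 _
              _ ≤ b := by
                simpa using pow_le_pow_of_le_one hb0 hb1.le
                  (Nat.one_le_iff_ne_zero.mpr (Nat.succ_ne_zero ℓ))) hb1
        intro h; rw [sub_eq_zero] at h; exact absurd h.symm (ne_of_lt hz1)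
    · exact (summable_geometric_of_lt_one hb0 hb1).mul_right _
    · intro ℓ z hz
      exact sigma_term_norm_le hz.1 hz.2 hb1 ℓ
  exact hcont.continuousAt (Icc_mem_nhds hx0 hxb)

open Set in
/-- Bound on `sigmaFn` for small `z`. -/
lemma sigmaFn_abs_le {z : ℝ} (h0 : 0 ≤ z) (h1 : z < 1) :
    |sigmaFn z| ≤ (1 - z)⁻¹ * (z / (1 - z)) := by
  have hsum : Summable fun ℓ : ℕ => z ^ ℓ * (z / (1 - z)) :=
    (summable_geometric_of_lt_one h0 h1).mul_right _
  have hb : ∀ ℓ : ℕ, ‖(-1 : ℝ) ^ ℓ * z ^ (ℓ + 1) / (1 - z ^ (ℓ + 1))‖ ≤ z ^ ℓ * (z / (1 - z)) :=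
    fun ℓ => sigma_term_norm_le h0 le_rfl h1 ℓ
  have hsn : Summable fun ℓ : ℕ => ‖(-1 : ℝ) ^ ℓ * z ^ (ℓ + 1) / (1 - z ^ (ℓ + 1))‖ :=
    Summable.of_nonneg_of_le (fun ℓ => norm_nonneg _) hb hsum
  calc |sigmaFn z| ≤ ∑' ℓ : ℕ, ‖(-1 : ℝ) ^ ℓ * z ^ (ℓ + 1) / (1 - z ^ (ℓ + 1))‖ :=
        norm_tsum_le_tsum_norm hsn
    _ ≤ ∑' ℓ : ℕ, z ^ ℓ * (z / (1 - z)) := Summable.tsum_le_tsum hb hsn hsum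
    _ = (1 - z)⁻¹ * (z / (1 - z)) := by
        rw [tsum_mul_right, tsum_geometric_of_lt_one h0 h1]

lemma sigmaFn_small {z : ℝ} (h0 : 0 < z) (h1 : z ≤ 1 / 4) : sigmaFn z < 1 := by
  have h1' : z < 1 := by linarith
  have := sigmaFn_abs_le h0.le h1'
  have hzb : (1 - z)⁻¹ * (z / (1 - z)) ≤ (3 / 4 : ℝ)⁻¹ * ((1 / 4) / (3 / 4)) := by
    have h34 : (3 / 4 : ℝ) ≤ 1 - z := by linarith
    have h34' : (0 : ℝ) < 3 / 4 := by norm_num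
    have hi : (1 - z)⁻¹ ≤ (3 / 4 : ℝ)⁻¹ := by
      apply inv_anti₀ h34' h34
    have hd : z / (1 - z) ≤ (1 / 4 : ℝ) / (3 / 4) := div_le_div₀ (by norm_num) h1 h34' h34
    have hnn : (0 : ℝ) ≤ z / (1 - z) := div_nonneg h0.le (by linarith)
    exact mul_le_mul hi hd hnn (by norm_num)
  have : |sigmaFn z| ≤ (3 / 4 : ℝ)⁻¹ * ((1 / 4) / (3 / 4)) := le_trans this hzb
  have habs := abs_le.mp this
  norm_num at habs
  linarith [habs.2]

open Set in
/-- The ratio `t/(1-t)` is strictly monotone on `[0,1)`. -/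
lemma ratio_lt_ratio {a b : ℝ} (ha : 0 ≤ a) (hab : a < b) (hb : b < 1) :
    a / (1 - a) < b / (1 - b) := by
  rw [div_lt_div_iff₀ (by linarith) (by linarith)]
  nlinarith

open Set in
/-- General root-localization lemma. -/
lemma exists_root_lt (f : ℝ → ℝ) (hcont : ∀ x ∈ Ioo (0 : ℝ) 1, ContinuousAt f x)
    {c : ℝ} (hc : c ∈ Ioo (0 : ℝ) 1) (hfc : 1 < f c)
    (hsmall : ∀ z : ℝ, 0 < z → z ≤ 1 / 4 → f z < 1) :
    ∃ x ∈ Ioo (0 : ℝ) 1, f x = 1 ∧ x < c := by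
  obtain ⟨hc0, hc1⟩ := hc
  set ε : ℝ := min (1 / 4) (c / 2) with hεdef
  have hε0 : 0 < ε := lt_min (by norm_num) (by linarith)
  have hεc : ε < c := lt_of_le_of_lt (min_le_right _ _) (by linarith)
  have hε4 : ε ≤ 1 / 4 := min_le_left _ _
  have hfε : f ε < 1 := hsmall ε hε0 hε4
  have hsub : Icc ε c ⊆ Ioo (0 : ℝ) 1 := fun y hy => ⟨lt_of_lt_of_le hε0 hy.1, lt_of_le_of_lt hy.2 hc1⟩
  have hconts : ContinuousOn f (Icc ε c) := fun y hy => (hcont y (hsub hy)).continuousWithinAt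
  have h1mem : (1 : ℝ) ∈ Icc (f ε) (f c) := ⟨hfε.le, hfc.le⟩
  obtain ⟨x, hxmem, hfx⟩ := intermediate_value_Icc hεc.le hconts h1mem
  refine ⟨x, hsub hxmem, hfx, ?_⟩
  rcases lt_or_eq_of_le hxmem.2 with h | h
  · exact h
  · exfalso; rw [h] at hfx; rw [hfx] at hfc; exact lt_irrefl _ hfc

open Set in
lemma sigmaJFn_continuousAt {k : ℕ} (hk : 1 ≤ k) {x : ℝ} (hx : x ∈ Ioo (0 : ℝ) 1) :
    ContinuousAt (sigmaJFn k) x := by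
  have hxk : x ^ k < 1 := pow_lt_one₀ hx.1.le hx.2 (by omega)
  have hden : (1 : ℝ) - x ^ k ≠ 0 := by intro h; rw [sub_eq_zero] at h; exact absurd h.symm (ne_of_lt hxk)
  exact (sigmaFn_continuousAt hx).sub ((continuousAt_pow x k).div
    (continuousAt_const.sub (continuousAt_pow x k)) hden)

open Set in
lemma sigmaJFn_small {k : ℕ} (hk : 1 ≤ k) {z : ℝ} (h0 : 0 < z) (h1 : z ≤ 1 / 4) :
    sigmaJFn k z < 1 := by
  have hz1 : z < 1 := by linarith
  have hzk1 : z ^ k < 1 := pow_lt_one₀ h0.le hz1 (by omega)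
  have hnn : 0 ≤ z ^ k / (1 - z ^ k) := div_nonneg (pow_nonneg h0.le _) (by linarith)
  have := sigmaFn_small h0 h1
  unfold sigmaJFn
  linarith

open Set in
/-- `ρ < r j` for any root `r j` of `σ_j`. -/
lemma rho_lt_of_sigmaJ (ρ : ℝ)
    (hρu : ∀ x ∈ Set.Ioo (0 : ℝ) 1, sigmaFn x = 1 → x = ρ)
    {j : ℕ} (hj : 1 ≤ j) {c : ℝ} (hc : c ∈ Ioo (0 : ℝ) 1) (hcr : sigmaJFn j c = 1) :
    ρ < c := by
  have hck : c ^ j < 1 := pow_lt_one₀ hc.1.le hc.2 (by omega)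
  have hpos : 0 < c ^ j / (1 - c ^ j) := div_pos (pow_pos hc.1 _) (by linarith)
  have hfc : 1 < sigmaFn c := by
    have : sigmaFn c = 1 + c ^ j / (1 - c ^ j) := by
      unfold sigmaJFn at hcr; linarith
    linarith
  obtain ⟨x, hxm, hfx, hxc⟩ := exists_root_lt sigmaFn (fun y hy => sigmaFn_continuousAt hy)
    hc hfc (fun z hz0 hz4 => sigmaFn_small hz0 hz4)
  have := hρu x hxm hfx
  rw [← this]; exact hxc

open Set in
/-- If `σ_j(c) = 1` with `j < k`, then `r k < c`. -/
lemma rk_lt (r : ℕ → ℝ)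
    (hru : ∀ j, 6 ≤ j → ∀ x ∈ Set.Ioo (0 : ℝ) 1, sigmaJFn j x = 1 → x = r j)
    {j k : ℕ} (hj : 6 ≤ j) (hjk : j < k) {c : ℝ} (hc : c ∈ Ioo (0 : ℝ) 1)
    (hcr : sigmaJFn j c = 1) : r k < c := by
  have hk : 6 ≤ k := le_of_lt (lt_of_le_of_lt hj hjk)
  have hck : c ^ j < 1 := pow_lt_one₀ hc.1.le hc.2 (by omega)
  have hckj : c ^ k < c ^ j := pow_lt_pow_right_of_lt_one₀ hc.1 hc.2 hjk
  have hratio : c ^ k / (1 - c ^ k) < c ^ j / (1 - c ^ j) :=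
    ratio_lt_ratio (pow_nonneg hc.1.le _) hckj hck
  have hfc : 1 < sigmaJFn k c := by
    unfold sigmaJFn at hcr ⊢; linarith
  obtain ⟨x, hxm, hfx, hxc⟩ := exists_root_lt (sigmaJFn k)
    (fun y hy => sigmaJFn_continuousAt (by omega) hy) hc hfc
    (fun z hz0 hz4 => sigmaJFn_small (by omega) hz0 hz4)
  have := hru k hk x hxm hfx
  rw [← this]; exact hxc

/-- If `ρ` is the unique solution of `σ(z) = 1` in `(0,1)` and, for each
`j ≥ 6`, `ρ_j = r j` is the unique solution of `σ_j(z) = 1` in `(0,1)`, then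
the sequence `(ρ_j)_{j ≥ 6}` is strictly decreasing and converges to `ρ`. -/
theorem rho_j_strict_anti_tendsto (ρ : ℝ)
    (hρ : ρ ∈ Set.Ioo (0 : ℝ) 1 ∧ sigmaFn ρ = 1)
    (hρu : ∀ x ∈ Set.Ioo (0 : ℝ) 1, sigmaFn x = 1 → x = ρ)
    (r : ℕ → ℝ)
    (hr : ∀ j, 6 ≤ j → r j ∈ Set.Ioo (0 : ℝ) 1 ∧ sigmaJFn j (r j) = 1)
    (hru : ∀ j, 6 ≤ j → ∀ x ∈ Set.Ioo (0 : ℝ) 1, sigmaJFn j x = 1 → x = r j) :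
    (∀ j k, 6 ≤ j → j < k → r k < r j) ∧ Tendsto r atTop (nhds ρ) := by
  have hanti : ∀ j k, 6 ≤ j → j < k → r k < r j := by
    intro j k hj hjk
    exact rk_lt r hru hj hjk (hr j hj).1 (hr j hj).2
  have hrho_lt : ∀ j, 6 ≤ j → ρ < r j := by
    intro j hj
    exact rho_lt_of_sigmaJ ρ hρu (by omega) (hr j hj).1 (hr j hj).2
  refine ⟨hanti, ?_⟩
  -- the shifted sequence
  set g : ℕ → ℝ := fun n => r (n + 6) with hgdef
  have hganti : Antitone g := by
    apply antitone_nat_of_succ_le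
    intro n
    exact le_of_lt (hanti (n + 6) (n + 1 + 6) (by omega) (by omega))
  have hgbdd : BddBelow (Set.range g) := by
    refine ⟨ρ, ?_⟩
    rintro y ⟨n, rfl⟩
    exact (hrho_lt (n + 6) (by omega)).le
  set L : ℝ := ⨅ n, g n with hLdef
  have hgL : Tendsto g atTop (nhds L) := tendsto_atTop_ciInf hganti hgbdd
  have hρL : ρ ≤ L := le_ciInf fun n => (hrho_lt (n + 6) (by omega)).le
  have hL1 : L < 1 := lt_of_le_of_lt (ciInf_le hgbdd 0) (hr 6 le_rfl).1.2
  have hLmem : L ∈ Set.Ioo (0 : ℝ) 1 := ⟨lt_of_lt_of_le hρ.1.1 hρL, hL1⟩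
  -- σ(g n) = 1 + t n with t n → 0
  have hb6 : r 6 ∈ Set.Ioo (0 : ℝ) 1 := (hr 6 le_rfl).1
  have hb60 : 0 < r 6 := hb6.1
  have hb61 : r 6 < 1 := hb6.2
  have hb66 : r 6 ^ 6 < 1 := pow_lt_one₀ hb60.le hb61 (by norm_num)
  have hgle : ∀ n, g n ≤ r 6 := by
    intro n
    rcases Nat.eq_zero_or_pos n with h | h
    · simp [hgdef, h]
    · exact (hanti 6 (n + 6) le_rfl (by omega)).le
  have hg0 : ∀ n, 0 < g n := fun n => (hr (n + 6) (by omega)).1.1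
  have ht_bound : ∀ n, g n ^ (n + 6) / (1 - g n ^ (n + 6))
      ≤ r 6 ^ n * (r 6 ^ 6 / (1 - r 6 ^ 6)) := by
    intro n
    have h1 : g n ^ (n + 6) ≤ r 6 ^ (n + 6) := pow_le_pow_left₀ (hg0 n).le (hgle n) _
    have h2 : r 6 ^ (n + 6) ≤ r 6 ^ 6 := pow_le_pow_of_le_one hb60.le hb61.le (by omega)
    have h3 : g n ^ (n + 6) ≤ r 6 ^ 6 := h1.trans h2
    have hden : 0 < 1 - r 6 ^ 6 := by linarith
    have hden2 : 1 - r 6 ^ 6 ≤ 1 - g n ^ (n + 6) := by linarith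
    calc g n ^ (n + 6) / (1 - g n ^ (n + 6)) ≤ r 6 ^ (n + 6) / (1 - r 6 ^ 6) :=
          div_le_div₀ (pow_nonneg hb60.le _) h1 hden hden2
      _ = r 6 ^ n * (r 6 ^ 6 / (1 - r 6 ^ 6)) := by rw [pow_add]; ring
  have ht_nonneg : ∀ n, 0 ≤ g n ^ (n + 6) / (1 - g n ^ (n + 6)) := by
    intro n
    have : g n ^ (n + 6) < 1 := pow_lt_one₀ (hg0 n).le
      (lt_of_le_of_lt (hgle n) hb61) (by omega)
    exact div_nonneg (pow_nonneg (hg0 n).le _) (by linarith)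
  have ht0 : Tendsto (fun n => g n ^ (n + 6) / (1 - g n ^ (n + 6))) atTop (nhds 0) := by
    apply squeeze_zero ht_nonneg ht_bound
    have := (tendsto_pow_atTop_nhds_zero_of_lt_one hb60.le hb61).mul_const
      (r 6 ^ 6 / (1 - r 6 ^ 6))
    simpa using this
  have hσg : ∀ n, sigmaFn (g n) = 1 + g n ^ (n + 6) / (1 - g n ^ (n + 6)) := by
    intro n
    have := (hr (n + 6) (by omega)).2
    unfold sigmaJFn at this
    linarith
  have hσgL : Tendsto (fun n => sigmaFn (g n)) atTop (nhds (sigmaFn L)) :=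
    (sigmaFn_continuousAt hLmem).tendsto.comp hgL
  have hσgL1 : Tendsto (fun n => sigmaFn (g n)) atTop (nhds 1) := by
    have : Tendsto (fun n => 1 + g n ^ (n + 6) / (1 - g n ^ (n + 6))) atTop (nhds (1 + 0)) :=
      tendsto_const_nhds.add ht0
    rw [add_zero] at this
    exact this.congr fun n => (hσg n).symm
  have hσL : sigmaFn L = 1 := tendsto_nhds_unique hσgL hσgL1
  have hLρ : L = ρ := hρu L hLmem hσL
  rw [← Filter.tendsto_add_atTop_iff_nat 6]
  rw [← hLρ]
  exact hgL
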